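/- Let F_1, …, F_m be pairwise disjoint subsets of F and set H_i := min(1, ∑_{t=1}^T ∑_{f∈F_i} W_{f,t}). Then the random variables H_1, …, H_m are negatively correlated in the sense that Cov(H_i, H_j) ≤ 0 for all i ≠ j, and consequently Var[∑_{i=1}^m H_i] ≤ ∑_{i=1}^m Var[H_i]. -/

import Mathlib

open MeasureTheory ProbabilityTheory Finset

lemma aux_prod_integral {Ω ι : Type*} [MeasurableSpace Ω] {μ : Measure Ω}
    [IsProbabilityMeasure μ] {f : ι → Ω → ℝ}
    (h : iIndepFun f μ)
    (hm : ∀ i, Measurable (f i)) (s : Finset ι) :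
    ∫ ω, ∏ i ∈ s, f i ω ∂μ = ∏ i ∈ s, ∫ ω, f i ω ∂μ := by
  classical
  induction s using Finset.induction with
  | empty => simp
  | @insert a s ha ih =>
    have hip : IndepFun (f a) (∏ j ∈ s, f j) μ :=
      (h.indepFun_finsetProd_of_notMem hm ha).symm
    have heq : (∏ j ∈ s, f j) = fun ω => ∏ j ∈ s, f j ω := by
      funext ω; simp [Finset.prod_apply]
    rw [heq] at hip
    have hmp : Measurable fun ω => ∏ j ∈ s, f j ω :=
      Finset.measurable_prod _ fun j _ => hm j
    calc ∫ ω, ∏ i ∈ insert a s, f i ω ∂μ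
        = ∫ ω, (f a * ∏ j ∈ s, f j) ω ∂μ := by
          apply integral_congr_ae; apply ae_of_all; intro ω
          rw [heq]; simp [Finset.prod_insert ha]
      _ = (∫ ω, f a ω ∂μ) * ∫ ω, ∏ j ∈ s, f j ω ∂μ := by
          have := hip.integral_mul_eq_mul_integral (hm a).aestronglyMeasurable hmp.aestronglyMeasurable
          simpa [heq] using this
      _ = ∏ i ∈ insert a s, ∫ ω, f i ω ∂μ := by
          rw [Finset.prod_insert ha, ih]

lemma aux_cov_eq {Ω : Type*} [MeasureSpace Ω] [IsProbabilityMeasure (ℙ : Measure Ω)]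
    {X Y : Ω → ℝ} (hX : Integrable X ℙ) (hY : Integrable Y ℙ)
    (hXY : Integrable (fun ω => X ω * Y ω) ℙ) :
    (∫ ω, (X ω - ∫ ω', X ω') * (Y ω - ∫ ω', Y ω')) =
      (∫ ω, X ω * Y ω) - (∫ ω, X ω) * (∫ ω, Y ω) := by
  set a := ∫ ω, X ω with ha
  set b := ∫ ω, Y ω with hb
  have hexp : ∀ ω, (X ω - a) * (Y ω - b) = (X ω * Y ω - a * Y ω) - (b * X ω - a * b) := by
    intro ω; ring
  simp_rw [hexp]
  have i1 : Integrable (fun ω => X ω * Y ω - a * Y ω) ℙ := hXY.sub (hY.const_mul a)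
  have i2 : Integrable (fun ω => b * X ω - a * b) ℙ := (hX.const_mul b).sub (integrable_const _)
  rw [integral_sub i1 i2, integral_sub hXY (hY.const_mul a),
    integral_sub (hX.const_mul b) (integrable_const _),
    integral_const_mul, integral_const_mul, integral_const]
  simp [← ha, ← hb]
  ring


/-- The covariance `Cov(X, Y) = E[(X - E[X])·(Y - E[Y])]` of two real random
variables on a measure space. -/
noncomputable def cov {Ω : Type*} [MeasureSpace Ω] (X Y : Ω → ℝ) : ℝ :=
  ∫ ω, (X ω - ∫ ω', X ω') * (Y ω - ∫ ω', Y ω')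

/-- in the round-process model (round families `(W t f)_f`
mutually independent across `t`, and a.s. at most one `W t f` equal to `1` per
round), for pairwise disjoint subsets `Fs 1, …, Fs m` of `F` and
`H i := min 1 (∑_t ∑_{f ∈ Fs i} W t f)`, the random variables `H 1, …, H m`
are negatively correlated — `Cov(H i, H j) ≤ 0` for `i ≠ j` — and consequently
`Var[∑ i, H i] ≤ ∑ i, Var[H i]`. -/
theorem stmt_6 {Ω : Type*} [MeasureSpace Ω] [IsProbabilityMeasure (ℙ : Measure Ω)]
    {F : Type*} [Fintype F] (T : ℕ)
    (W : Fin T → F → Ω → ℝ)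
    (hW01 : ∀ t f ω, W t f ω = 0 ∨ W t f ω = 1)
    (hWmeas : ∀ t f, Measurable (W t f))
    (hindep : iIndepFun
      (fun t ω => fun f => W t f ω) ℙ)
    (honce : ∀ᵐ ω ∂ℙ, ∀ t, ∑ f, W t f ω ≤ 1)
    (m : ℕ) (Fs : Fin m → Finset F)
    (hdisj : ∀ i j, i ≠ j → Disjoint (Fs i) (Fs j))
    (H : Fin m → Ω → ℝ)
    (hH : ∀ i ω, H i ω = min 1 (∑ t, ∑ f ∈ Fs i, W t f ω)) :
    (∀ i j, i ≠ j → cov (H i) (H j) ≤ 0) ∧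
    variance (fun ω => ∑ i, H i ω) ℙ ≤ ∑ i, variance (H i) ℙ := by
  unfold cov
  classical
  have hWnn : ∀ t f ω, 0 ≤ W t f ω := fun t f ω => by
    rcases hW01 t f ω with h | h <;> simp [h]
  set X : Fin m → Fin T → Ω → ℝ := fun i t ω => ∑ f ∈ Fs i, W t f ω with hXdef
  have hXmeas : ∀ i t, Measurable (X i t) := fun i t =>
    Finset.measurable_sum _ fun f _ => hWmeas t f
  have hXnn : ∀ i t ω, 0 ≤ X i t ω := fun i t ω =>
    Finset.sum_nonneg fun f _ => hWnn t f ω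
  -- a.e. each finset-sum is 0 or 1
  have hs01 : ∀ᵐ ω ∂ℙ, ∀ (t : Fin T) (s : Finset F),
      (∑ f ∈ s, W t f ω = 0 ∨ ∑ f ∈ s, W t f ω = 1) := by
    filter_upwards [honce] with ω hω t s
    by_cases hz : ∀ f ∈ s, W t f ω = 0
    · exact Or.inl (Finset.sum_eq_zero hz)
    · right
      push_neg at hz
      obtain ⟨f₀, hf₀s, hf₀⟩ := hz
      have hw1 : W t f₀ ω = 1 := (hW01 t f₀ ω).resolve_left hf₀
      have h1 : (1:ℝ) ≤ ∑ f ∈ s, W t f ω := by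
        rw [← hw1]
        exact Finset.single_le_sum (fun f _ => hWnn t f ω) hf₀s
      have h2 : ∑ f ∈ s, W t f ω ≤ 1 :=
        le_trans (Finset.sum_le_sum_of_subset_of_nonneg (Finset.subset_univ s)
          (fun f _ _ => hWnn t f ω)) (hω t)
      exact le_antisymm h2 h1
  set G : Fin m → Ω → ℝ := fun i ω => ∏ t, (1 - X i t ω) with hGdef
  have hGmeas : ∀ i, Measurable (G i) := fun i =>
    Finset.measurable_prod _ fun t _ => measurable_const.sub (hXmeas i t)
  have hG01 : ∀ᵐ ω ∂ℙ, ∀ i, G i ω = 0 ∨ G i ω = 1 := by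
    filter_upwards [hs01] with ω hω i
    by_cases hz : ∃ t, X i t ω = 1
    · obtain ⟨t₀, ht₀⟩ := hz
      exact Or.inl (Finset.prod_eq_zero (mem_univ t₀) (by rw [ht₀]; ring))
    · push_neg at hz
      right
      refine Finset.prod_eq_one fun t _ => ?_
      have : X i t ω = 0 := (hω t (Fs i)).resolve_right (hz t)
      rw [this]; ring
  have hHG : ∀ᵐ ω ∂ℙ, ∀ i, H i ω = 1 - G i ω := by
    filter_upwards [hs01] with ω hω i
    rw [hH]
    by_cases hz : ∃ t, X i t ω = 1
    · obtain ⟨t₀, ht₀⟩ := hz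
      have hG0 : G i ω = 0 :=
        Finset.prod_eq_zero (mem_univ t₀) (by rw [ht₀]; ring)
      have hS : (1:ℝ) ≤ ∑ t, X i t ω := by
        rw [← ht₀]
        exact Finset.single_le_sum (fun t _ => hXnn i t ω) (mem_univ t₀)
      rw [hG0]
      simpa using min_eq_left hS
    · push_neg at hz
      have hall : ∀ t, X i t ω = 0 := fun t => (hω t (Fs i)).resolve_right (hz t)
      have hS : ∑ t, X i t ω = 0 := Finset.sum_eq_zero fun t _ => hall t
      have hG1 : G i ω = 1 := Finset.prod_eq_one fun t _ => by rw [hall t]; ring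
      rw [show (∑ t, ∑ f ∈ Fs i, W t f ω) = ∑ t, X i t ω from rfl, hS, hG1]
      simp
  -- integrability
  have hHfun : ∀ i, H i = fun ω => min 1 (∑ t, X i t ω) := fun i => funext (hH i)
  have hHmeas : ∀ i, Measurable (H i) := fun i => by
    rw [hHfun i]
    exact measurable_const.min (Finset.measurable_sum _ fun t _ => hXmeas i t)
  have hHbd : ∀ i ω, |H i ω| ≤ 1 := by
    intro i ω
    rw [hH, abs_le]
    constructor
    · have : (0:ℝ) ≤ min 1 (∑ t, X i t ω) :=
        le_min zero_le_one (Finset.sum_nonneg fun t _ => hXnn i t ω)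
      linarith
    · exact min_le_left _ _
  have hHint : ∀ i, Integrable (H i) ℙ := fun i =>
    ⟨(hHmeas i).aestronglyMeasurable,
      HasFiniteIntegral.of_bounded (ae_of_all _ (hHbd i))⟩
  have hHHint : ∀ i j, Integrable (fun ω => H i ω * H j ω) ℙ := fun i j =>
    ⟨((hHmeas i).mul (hHmeas j)).aestronglyMeasurable,
      HasFiniteIntegral.of_bounded (C := 1) (ae_of_all _ fun ω => by
        have h := mul_le_mul (hHbd i ω) (hHbd j ω) (abs_nonneg _) zero_le_one
        rw [norm_mul]
        simpa using h)⟩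
  have hGint : ∀ i, Integrable (G i) ℙ := fun i =>
    ⟨(hGmeas i).aestronglyMeasurable,
      HasFiniteIntegral.of_bounded (C := 1) (by
        filter_upwards [hG01] with ω hω
        rcases hω i with h | h <;> simp [h])⟩
  have hGGint : ∀ i j, Integrable (fun ω => G i ω * G j ω) ℙ := fun i j =>
    ⟨((hGmeas i).mul (hGmeas j)).aestronglyMeasurable,
      HasFiniteIntegral.of_bounded (C := 1) (by
        filter_upwards [hG01] with ω hω
        rcases hω i with h | h <;> rcases hω j with h' | h' <;> simp [h, h'])⟩
  have hXint : ∀ i t, Integrable (X i t) ℙ := fun i t =>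
    ⟨(hXmeas i t).aestronglyMeasurable,
      HasFiniteIntegral.of_bounded (C := 1) (by
        filter_upwards [hs01] with ω hω
        rcases hω t (Fs i) with h | h
        · have hx : X i t ω = 0 := h
          simp [hx]
        · have hx : X i t ω = 1 := h
          simp [hx])⟩
  -- independence-based product formulas
  have hprod : ∀ (φ : Fin T → (F → ℝ) → ℝ), (∀ t, Measurable (φ t)) →
      ∫ ω, ∏ t, φ t (fun f => W t f ω) = ∏ t, ∫ ω, φ t (fun f => W t f ω) := by
    intro φ hφ
    have h2 := hindep.comp φ hφ
    have h3 : ∀ t, Measurable (fun ω => φ t (fun f => W t f ω)) := fun t =>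
      (hφ t).comp (measurable_pi_lambda _ fun f => hWmeas t f)
    exact aux_prod_integral h2 h3 Finset.univ
  have hEG : ∀ i, ∫ ω, G i ω = ∏ t, ∫ ω, (1 - X i t ω) := by
    intro i
    have := hprod (fun t v => 1 - ∑ f ∈ Fs i, v f)
      (fun t => measurable_const.sub
        (Finset.measurable_sum _ fun f _ => measurable_pi_apply f))
    exact this
  have hEGG : ∀ i j, ∫ ω, G i ω * G j ω
      = ∏ t, ∫ ω, (1 - X i t ω) * (1 - X j t ω) := by
    intro i j
    have := hprod (fun t v => (1 - ∑ f ∈ Fs i, v f) * (1 - ∑ f ∈ Fs j, v f))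
      (fun t => (measurable_const.sub
          (Finset.measurable_sum _ fun f _ => measurable_pi_apply f)).mul
        (measurable_const.sub
          (Finset.measurable_sum _ fun f _ => measurable_pi_apply f)))
    rw [← this]
    apply integral_congr_ae
    apply ae_of_all
    intro ω
    simp [hGdef, hXdef, ← Finset.prod_mul_distrib]
  -- the covariance bound
  have hcov : ∀ i j, i ≠ j →
      (∫ ω, (H i ω - ∫ ω', H i ω') * (H j ω - ∫ ω', H j ω')) ≤ 0 := by
    intro i j hij
    rw [aux_cov_eq (hHint i) (hHint j) (hHHint i j)]
    -- express E[H] via G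
    have hEH : ∀ k, ∫ ω, H k ω = 1 - ∫ ω, G k ω := by
      intro k
      rw [show ∫ ω, H k ω = ∫ ω, (1 - G k ω) from
        integral_congr_ae (by filter_upwards [hHG] with ω hω using hω k)]
      rw [integral_sub (integrable_const _) (hGint k), integral_const]
      simp
    have hEHH : ∫ ω, H i ω * H j ω
        = 1 - (∫ ω, G i ω) - (∫ ω, G j ω) + ∫ ω, G i ω * G j ω := by
      rw [show ∫ ω, H i ω * H j ω = ∫ ω, (1 - G i ω - G j ω + G i ω * G j ω) from
        integral_congr_ae (by
          filter_upwards [hHG] with ω hω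
          rw [hω i, hω j]; ring)]
      have ig0 : Integrable (fun ω => (1:ℝ) - G i ω) ℙ := (integrable_const _).sub (hGint i)
      have ig1 : Integrable (fun ω => (1:ℝ) - G i ω - G j ω) ℙ := ig0.sub (hGint j)
      rw [integral_add ig1 (hGGint i j), integral_sub ig0 (hGint j),
        integral_sub (integrable_const _) (hGint i), integral_const]
      simp
    rw [hEHH, hEH i, hEH j]
    have hgoal : ∫ ω, G i ω * G j ω ≤ (∫ ω, G i ω) * (∫ ω, G j ω) := by
      rw [hEGG i j, hEG i, hEG j, ← Finset.prod_mul_distrib]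
      apply Finset.prod_le_prod
      · intro t _
        apply integral_nonneg_of_ae
        filter_upwards [hs01] with ω hω
        rcases hω t (Fs i) with h | h <;> rcases hω t (Fs j) with h' | h' <;>
          [skip; skip; skip; skip] <;>
          first
          | (have hx : X i t ω = 0 := h; have hx' : X j t ω = 0 := h'; rw [hx, hx']; norm_num)
          | (have hx : X i t ω = 0 := h; have hx' : X j t ω = 1 := h'; rw [hx, hx']; norm_num)
          | (have hx : X i t ω = 1 := h; have hx' : X j t ω = 0 := h'; rw [hx, hx']; norm_num)
          | (have hx : X i t ω = 1 := h; have hx' : X j t ω = 1 := h'; rw [hx, hx']; norm_num)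
      · intro t _
        -- within-round exclusivity: X i t * X j t = 0 a.s.
        have hexcl : ∀ᵐ ω ∂ℙ, (1 - X i t ω) * (1 - X j t ω)
            = 1 - X i t ω - X j t ω := by
          filter_upwards [hs01, honce] with ω h1 h2
          have hsum : X i t ω + X j t ω ≤ 1 := by
            have hu : X i t ω + X j t ω = ∑ f ∈ Fs i ∪ Fs j, W t f ω :=
              (Finset.sum_union (hdisj i j hij)).symm
            rw [hu]
            exact le_trans (Finset.sum_le_sum_of_subset_of_nonneg
              (Finset.subset_univ _) (fun f _ _ => hWnn t f ω)) (h2 t)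
          have hz : X i t ω * X j t ω = 0 := by
            rcases h1 t (Fs i) with h | h
            · have hx : X i t ω = 0 := h
              rw [hx, zero_mul]
            · have hXi : X i t ω = 1 := h
              have hXjle : X j t ω ≤ 0 := by linarith
              have : X j t ω = 0 := le_antisymm hXjle (hXnn j t ω)
              rw [this, mul_zero]
          nlinarith [hz]
        rw [show ∫ ω, (1 - X i t ω) * (1 - X j t ω)
            = ∫ ω, (1 - X i t ω - X j t ω) from integral_congr_ae hexcl]
        have k1 : Integrable (fun ω => (1:ℝ) - X i t ω) ℙ :=
          (integrable_const _).sub (hXint i t)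
        rw [integral_sub k1 (hXint j t), integral_sub (integrable_const _) (hXint i t),
          integral_sub (integrable_const _) (hXint j t), integral_const]
        have ha : 0 ≤ ∫ ω, X i t ω := integral_nonneg (fun ω => hXnn i t ω)
        have hb : 0 ≤ ∫ ω, X j t ω := integral_nonneg (fun ω => hXnn j t ω)
        simp only [probReal_univ, ENNReal.toReal_one, smul_eq_mul, one_mul]
        nlinarith [mul_nonneg ha hb]
    nlinarith [hgoal]
  refine ⟨hcov, ?_⟩
  -- variance part
  have hHmem2 : ∀ i, MemLp (H i) 2 ℙ := fun i =>
    MemLp.of_bound (hHmeas i).aestronglyMeasurable 1 (ae_of_all _ (hHbd i))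
  have hSmem2 : MemLp (fun ω => ∑ i, H i ω) 2 ℙ := by
    have heqS : (fun ω => ∑ i, H i ω) = ∑ i, H i := by
      funext ω; simp
    rw [heqS]
    exact memLp_finset_sum' univ fun i _ => hHmem2 i
  set cE : Fin m → Fin m → ℝ :=
    fun i j => (∫ ω, H i ω * H j ω) - (∫ ω, H i ω) * (∫ ω, H j ω) with hcE
  have hvar : ∀ i, variance (H i) ℙ = cE i i := by
    intro i
    rw [variance_eq_sub (hHmem2 i), hcE]
    have h1 : ∫ ω, (H i ^ 2) ω = ∫ ω, H i ω * H i ω := by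
      apply integral_congr_ae; apply ae_of_all; intro ω; simp [sq]
    simp only [Pi.pow_apply] at h1 ⊢
    rw [h1]; ring
  have hvarS : variance (fun ω => ∑ i, H i ω) ℙ = ∑ i, ∑ j, cE i j := by
    rw [variance_eq_sub hSmem2]
    have h1 : ∫ ω, ((fun ω => ∑ i, H i ω) ^ 2) ω
        = ∑ i, ∑ j, ∫ ω, H i ω * H j ω := by
      calc ∫ ω, ((fun ω => ∑ i, H i ω) ^ 2) ω
          = ∫ ω, ∑ i, ∑ j, H i ω * H j ω := by
            apply integral_congr_ae; apply ae_of_all; intro ω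
            simp only [Pi.pow_apply]
            rw [sq, Finset.sum_mul_sum]
        _ = ∑ i, ∫ ω, ∑ j, H i ω * H j ω :=
            integral_finset_sum univ fun i _ =>
              integrable_finset_sum univ fun j _ => hHHint i j
        _ = ∑ i, ∑ j, ∫ ω, H i ω * H j ω :=
            Finset.sum_congr rfl fun i _ =>
              integral_finset_sum univ fun j _ => hHHint i j
    have h2 : ∫ ω, ∑ i, H i ω = ∑ i, ∫ ω, H i ω :=
      integral_finset_sum univ fun i _ => hHint i
    simp only [Pi.pow_apply] at h1
    simp only [Pi.pow_apply]
    rw [h1, h2, sq, Finset.sum_mul_sum]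
    rw [← Finset.sum_sub_distrib]
    refine Finset.sum_congr rfl fun i _ => ?_
    rw [← Finset.sum_sub_distrib]
  rw [hvarS]
  apply Finset.sum_le_sum
  intro i _
  rw [hvar i, ← Finset.add_sum_erase univ (cE i) (mem_univ i)]
  have hle : ∑ j ∈ univ.erase i, cE i j ≤ 0 := by
    apply Finset.sum_nonpos
    intro j hj
    have hij : i ≠ j := (Finset.ne_of_mem_erase hj).symm
    have := hcov i j hij
    rw [aux_cov_eq (hHint i) (hHint j) (hHHint i j)] at this
    exact this
  linarith
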